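/- arXiv:1803.05560 — 2 statements merged into one kernel-verified Lean document; each statement's English description precedes it below -/
import Mathlib

section
/- Let d ≥ 2, γ ∈ (0,1), κ ∈ (0,1/2], and let f ∈ L^1(B_6) satisfy the Dini condition ∫_0^1 ω_{f,B_4}(t)/t dt < ∞. Then ∫_0^1 ω̃_{f,B_4}(t)/t dt < ∞, and there exists a constant C, depending only on d, γ, and κ, such that for every r ∈ (0,1], ∑_{j=0}^∞ ω̃_{f,B_3}(κ^j r) ≤ C ∫_0^r ω̃_{f,B_4}(t)/t dt. -/
open MeasureTheory Metric Set

noncomputable section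

/-- Mean oscillation of `f` over the ball `B_m`:
`ω_{f,B_m}(r) = sup_{x ∈ B_m} ⨍_{B_r(x)} |f(y) - (f)_{B_r(x)}| dy`. -/
def mOsc (d : ℕ) (f : EuclideanSpace ℝ (Fin d) → ℝ) (m r : ℝ) : ℝ :=
  ⨆ x ∈ ball (0 : EuclideanSpace ℝ (Fin d)) m,
    ⨍ y in ball x r, |f y - ⨍ z in ball x r, f z|

/-- The modified oscillation `ω̃(r) = ∑_{i=1}^∞ κ^{γ i} (ω(κ^{-i} r)` if `κ^{-i} r < 1`,
`ω(1)` otherwise`)`. -/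
def tosc (κ γ : ℝ) (w : ℝ → ℝ) (r : ℝ) : ℝ :=
  ∑' i : ℕ,
    κ ^ (γ * (i + 1 : ℕ)) * (if r / κ ^ (i + 1) < 1 then w (r / κ ^ (i + 1)) else w 1)

section osc
variable {d : ℕ}

local notation "E" => EuclideanSpace ℝ (Fin d)

lemma myNontrivial (hd : 2 ≤ d) : Nontrivial (EuclideanSpace ℝ (Fin d)) := by
  haveI : NeZero d := ⟨by omega⟩
  infer_instance

lemma V1_pos (hd : 2 ≤ d) : 0 < (volume (ball (0:E) 1)).toReal :=
  ENNReal.toReal_pos (ne_of_gt (measure_ball_pos _ _ one_pos)) measure_ball_lt_top.ne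

lemma vol_ball_eq (hd : 2 ≤ d) (x : E) {r : ℝ} (hr : 0 ≤ r) :
    (volume (ball x r)).toReal = r ^ d * (volume (ball (0:E) 1)).toReal := by
  haveI := myNontrivial hd
  rw [Measure.addHaar_ball volume x hr, finrank_euclideanSpace_fin,
    ENNReal.toReal_mul, ENNReal.toReal_ofReal (pow_nonneg hr d)]

variable (d) in
def oscB (f : E → ℝ) (x : E) (r : ℝ) : ℝ :=
  ⨍ y in ball x r, |f y - ⨍ z in ball x r, f z|

lemma avg_abs_nonneg {g : E → ℝ} {s : Set E} : 0 ≤ ⨍ y in s, |g y| := by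
  rw [setAverage_eq]
  exact smul_nonneg (by positivity) (integral_nonneg fun y => abs_nonneg _)

lemma oscB_nonneg (f : E → ℝ) (x : E) (r : ℝ) : 0 ≤ oscB d f x r := avg_abs_nonneg

lemma oscB_le (hd : 2 ≤ d) {f : E → ℝ} {x : E} {r : ℝ} (hr : 0 < r)
    (hf : IntegrableOn f (ball x r)) (c : ℝ) :
    oscB d f x r ≤ 2 * ⨍ y in ball x r, |f y - c| := by
  set ν := (volume (ball x r)).toReal with hνdef
  have hν : 0 < ν := by
    rw [hνdef, vol_ball_eq hd x hr.le]
    exact mul_pos (pow_pos hr d) (V1_pos hd)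
  set A := ⨍ z in ball x r, f z with hA
  have hconst : ∀ c' : ℝ, IntegrableOn (fun _ : E => c') (ball x r) :=
    fun c' => integrableOn_const measure_ball_lt_top.ne
  have hfc : IntegrableOn (fun y => |f y - c|) (ball x r) := (hf.sub (hconst c)).abs
  have hfA : IntegrableOn (fun y => |f y - A|) (ball x r) := (hf.sub (hconst A)).abs
  set I := ∫ y in ball x r, |f y - c| with hI
  have hI0 : 0 ≤ I := integral_nonneg fun y => abs_nonneg _
  -- step 1
  have hsub : ∫ y in ball x r, (f y - c) = ν * (A - c) := by
    rw [integral_sub hf (hconst c), setIntegral_const, hA, setAverage_eq, smul_eq_mul,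
      smul_eq_mul, mul_sub, ← mul_assoc, measureReal_def, ← hνdef, mul_inv_cancel₀ hν.ne', one_mul]
  have step1 : ν * |A - c| ≤ I := by
    have := norm_integral_le_integral_norm (μ := volume.restrict (ball x r))
      (f := fun y => f y - c)
    simp only [Real.norm_eq_abs, hsub] at this
    calc ν * |A - c| = |ν * (A - c)| := by
          rw [abs_mul, abs_of_pos hν]
        _ ≤ I := this
  -- step 2
  have step2 : ∫ y in ball x r, |f y - A| ≤ 2 * I := by
    have hmono : ∫ y in ball x r, |f y - A| ≤ ∫ y in ball x r, (|f y - c| + |A - c|) := by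
      refine integral_mono hfA (hfc.add (hconst _)) ?_
      intro y
      calc |f y - A| = |(f y - c) + (c - A)| := by congr 1; ring
        _ ≤ |f y - c| + |c - A| := abs_add_le _ _
        _ = |f y - c| + |A - c| := by rw [abs_sub_comm c A]
    have : ∫ y in ball x r, (|f y - c| + |A - c|) = I + ν * |A - c| := by
      rw [integral_add hfc (hconst _), setIntegral_const, smul_eq_mul, measureReal_def, ← hνdef, ← hI]
    linarith
  have : oscB d f x r = ν⁻¹ * ∫ y in ball x r, |f y - A| := by
    rw [oscB, setAverage_eq, smul_eq_mul, measureReal_def]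
  rw [this, setAverage_eq, smul_eq_mul, measureReal_def, ← hνdef, ← hI]
  calc ν⁻¹ * ∫ y in ball x r, |f y - A| ≤ ν⁻¹ * (2 * I) := by
        exact mul_le_mul_of_nonneg_left step2 (inv_nonneg.2 hν.le)
    _ = 2 * (ν⁻¹ * I) := by ring

lemma ball_sub6 {x : E} {m r : ℝ} (hx : x ∈ ball (0:E) m) (hm : m ≤ 5) (hr : r ≤ 1) :
    ball x r ⊆ ball (0:E) 6 := by
  intro y hy
  rw [mem_ball] at *
  calc dist y 0 ≤ dist y x + dist x 0 := dist_triangle _ _ _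
    _ < r + m := add_lt_add hy hx
    _ ≤ 1 + 5 := add_le_add hr hm
    _ = 6 := by norm_num

lemma oscB_double (hd : 2 ≤ d) {f : E → ℝ} {x : E} {a b : ℝ} (ha : 0 < a) (hab : a ≤ b)
    (hf : IntegrableOn f (ball x b)) :
    oscB d f x a ≤ 2 * (b / a) ^ d * oscB d f x b := by
  have hb : 0 < b := ha.trans_le hab
  have hsub : ball x a ⊆ ball x b := ball_subset_ball hab
  set c := ⨍ z in ball x b, f z with hc
  have hfc : IntegrableOn (fun y => |f y - c|) (ball x b) :=
    (hf.sub (integrableOn_const measure_ball_lt_top.ne)).abs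
  have hmono : ∫ y in ball x a, |f y - c| ≤ ∫ y in ball x b, |f y - c| :=
    setIntegral_mono_set hfc (Filter.Eventually.of_forall fun y => abs_nonneg _)
      (HasSubset.Subset.eventuallyLE hsub)
  have key : (volume (ball x a)).toReal⁻¹ = (b / a) ^ d * (volume (ball x b)).toReal⁻¹ := by
    rw [vol_ball_eq hd x ha.le, vol_ball_eq hd x hb.le, div_pow]
    have h1 : (0:ℝ) < a ^ d := pow_pos ha d
    have h2 : (0:ℝ) < b ^ d := pow_pos hb d
    have h3 := V1_pos (d := d) hd
    field_simp
  calc oscB d f x a ≤ 2 * ⨍ y in ball x a, |f y - c| := oscB_le hd ha (hf.mono_set hsub) c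
    _ = 2 * ((volume (ball x a)).toReal⁻¹ * ∫ y in ball x a, |f y - c|) := by
        rw [setAverage_eq, smul_eq_mul, measureReal_def]
    _ ≤ 2 * ((volume (ball x a)).toReal⁻¹ * ∫ y in ball x b, |f y - c|) := by
        have h0 : (0:ℝ) ≤ (volume (ball x a)).toReal⁻¹ := by positivity
        gcongr
    _ = 2 * (b / a) ^ d * ((volume (ball x b)).toReal⁻¹ * ∫ y in ball x b, |f y - c|) := by
        rw [key]; ring
    _ = 2 * (b / a) ^ d * oscB d f x b := by rw [oscB, setAverage_eq, smul_eq_mul, measureReal_def]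

lemma oscB_bound (hd : 2 ≤ d) {f : E → ℝ} {x : E} {r : ℝ} (hr : 0 < r)
    (hsub : ball x r ⊆ ball (0:E) 6) (hf6 : IntegrableOn f (ball (0:E) 6)) :
    oscB d f x r ≤ 2 * ((volume (ball (0:E) r)).toReal⁻¹ * ∫ y in ball (0:E) 6, |f y|) := by
  have hf : IntegrableOn f (ball x r) := hf6.mono_set hsub
  have hmono : ∫ y in ball x r, |f y| ≤ ∫ y in ball (0:E) 6, |f y| :=
    setIntegral_mono_set hf6.abs (Filter.Eventually.of_forall fun y => abs_nonneg _)
      (HasSubset.Subset.eventuallyLE hsub)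
  have hveq : (volume (ball x r)).toReal = (volume (ball (0:E) r)).toReal := by
    rw [vol_ball_eq hd x hr.le, vol_ball_eq hd 0 hr.le]
  have hv0 : (0:ℝ) < (volume (ball (0:E) r)).toReal := by
    rw [vol_ball_eq hd 0 hr.le]
    exact mul_pos (pow_pos hr d) (V1_pos hd)
  calc oscB d f x r ≤ 2 * ⨍ y in ball x r, |f y - 0| := oscB_le hd hr hf 0
    _ = 2 * ((volume (ball (0:E) r)).toReal⁻¹ * ∫ y in ball x r, |f y|) := by
        simp only [sub_zero, setAverage_eq, smul_eq_mul, measureReal_def, hveq]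
    _ ≤ 2 * ((volume (ball (0:E) r)).toReal⁻¹ * ∫ y in ball (0:E) 6, |f y|) := by
        have h0 : (0:ℝ) ≤ (volume (ball (0:E) r)).toReal⁻¹ := by positivity
        gcongr

lemma mOsc_eq (f : E → ℝ) (m r : ℝ) :
    mOsc d f m r = ⨆ x, ⨆ _ : x ∈ ball (0:E) m, oscB d f x r := rfl

lemma mOsc_nonneg (f : E → ℝ) (m r : ℝ) : 0 ≤ mOsc d f m r :=
  Real.iSup_nonneg fun x => Real.iSup_nonneg fun _ => oscB_nonneg f x r

lemma mOsc_le_of_forall {f : E → ℝ} {m r M : ℝ} (hM : 0 ≤ M)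
    (h : ∀ x ∈ ball (0:E) m, oscB d f x r ≤ M) : mOsc d f m r ≤ M :=
  Real.iSup_le (fun x => Real.iSup_le (fun hx => h x hx) hM) hM

lemma le_mOsc (hd : 2 ≤ d) {f : E → ℝ} {m r : ℝ} {x : E} (hx : x ∈ ball (0:E) m)
    (hm : m ≤ 5) (hr : 0 < r) (hr1 : r ≤ 1) (hf6 : IntegrableOn f (ball (0:E) 6)) :
    oscB d f x r ≤ mOsc d f m r := by
  set M := 2 * ((volume (ball (0:E) r)).toReal⁻¹ * ∫ y in ball (0:E) 6, |f y|) with hM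
  have hbdd : BddAbove (Set.range fun x : E => ⨆ _ : x ∈ ball (0:E) m, oscB d f x r) := by
    refine ⟨max M 0, ?_⟩
    rintro _ ⟨z, rfl⟩
    dsimp only
    by_cases hz : z ∈ ball (0:E) m
    · rw [ciSup_pos hz]
      exact le_max_of_le_left (oscB_bound hd hr (ball_sub6 hz hm hr1) hf6)
    · haveI : IsEmpty (z ∈ ball (0:E) m) := ⟨hz⟩
      rw [Real.iSup_of_isEmpty]
      exact le_max_right _ _
  have := le_ciSup hbdd x
  rwa [ciSup_pos hx] at this

lemma mOsc_double (hd : 2 ≤ d) {f : E → ℝ} {m a b : ℝ} (hm0 : 0 < m) (hm : m ≤ 5)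
    (ha : 0 < a) (hab : a ≤ b) (hb1 : b ≤ 1) (hf6 : IntegrableOn f (ball (0:E) 6)) :
    mOsc d f m a ≤ 2 * (b / a) ^ d * mOsc d f m b := by
  have hb : 0 < b := ha.trans_le hab
  have hRHS : 0 ≤ 2 * (b / a) ^ d * mOsc d f m b := by
    have := mOsc_nonneg (d := d) f m b
    positivity
  refine mOsc_le_of_forall hRHS fun x hx => ?_
  have hfb : IntegrableOn f (ball x b) := hf6.mono_set (ball_sub6 hx hm hb1)
  calc oscB d f x a ≤ 2 * (b / a) ^ d * oscB d f x b := oscB_double hd ha hab hfb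
    _ ≤ 2 * (b / a) ^ d * mOsc d f m b := by
        have h1 : (0:ℝ) ≤ 2 * (b / a) ^ d := by positivity
        exact mul_le_mul_of_nonneg_left (le_mOsc hd hx hm hb hb1 hf6) h1

lemma mOsc_three_le_four (hd : 2 ≤ d) {f : E → ℝ} {r : ℝ} (hr : 0 < r) (hr1 : r ≤ 1)
    (hf6 : IntegrableOn f (ball (0:E) 6)) : mOsc d f 3 r ≤ mOsc d f 4 r := by
  refine mOsc_le_of_forall (mOsc_nonneg f 4 r) fun x hx => ?_
  have hx4 : x ∈ ball (0:E) 4 := ball_subset_ball (by norm_num) hx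
  exact le_mOsc hd hx4 (by norm_num) hr hr1 hf6

end osc


section toscsec

variable {κ γ : ℝ} {d : ℕ}

def wbar (W : ℝ → ℝ) : ℝ → ℝ := fun s => if s < 1 then W s else W 1

lemma tosc_eq_wbar (W : ℝ → ℝ) (r : ℝ) :
    tosc κ γ W r = ∑' i : ℕ, κ ^ (γ * (i + 1 : ℕ)) * wbar W (r / κ ^ (i + 1)) := rfl

lemma coef_eq (hκ0 : 0 < κ) (i : ℕ) :
    κ ^ (γ * (i + 1 : ℕ)) = (κ ^ γ) ^ (i + 1) := by
  rw [Real.rpow_mul hκ0.le, Real.rpow_natCast]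

lemma wbar_nonneg {W : ℝ → ℝ} (hW0 : ∀ s, 0 ≤ W s) (s : ℝ) : 0 ≤ wbar W s := by
  unfold wbar; split <;> apply hW0

lemma wbar_double {W : ℝ → ℝ} (hW0 : ∀ s, 0 ≤ W s)
    (hWd : ∀ a b : ℝ, 0 < a → a ≤ b → b ≤ 1 → W a ≤ 2 * (b / a) ^ d * W b)
    {a b : ℝ} (ha : 0 < a) (hab : a ≤ b) :
    wbar W a ≤ 2 * (b / a) ^ d * wbar W b := by
  have hb : 0 < b := ha.trans_le hab
  unfold wbar
  by_cases hb1 : b < 1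
  · have ha1 : a < 1 := lt_of_le_of_lt hab hb1
    rw [if_pos ha1, if_pos hb1]
    exact hWd a b ha hab hb1.le
  · rw [if_neg hb1]
    push_neg at hb1
    by_cases ha1 : a < 1
    · rw [if_pos ha1]
      calc W a ≤ 2 * (1 / a) ^ d * W 1 := hWd a 1 ha ha1.le le_rfl
        _ ≤ 2 * (b / a) ^ d * W 1 := by
            have h1 : (1:ℝ) / a ≤ b / a := by gcongr
            have := hW0 1
            gcongr
    · rw [if_neg ha1]
      refine le_mul_of_one_le_left (hW0 1) ?_
      have h1 : (1:ℝ) ≤ b / a := (one_le_div ha).2 hab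
      calc (1:ℝ) ≤ (b/a) ^ d := one_le_pow₀ h1
        _ ≤ 2 * (b/a) ^ d := by nlinarith [pow_nonneg (le_trans zero_le_one h1) d]

lemma wbar_le_of_ge {W : ℝ → ℝ} (hW0 : ∀ s, 0 ≤ W s)
    (hWd : ∀ a b : ℝ, 0 < a → a ≤ b → b ≤ 1 → W a ≤ 2 * (b / a) ^ d * W b)
    {r0 s : ℝ} (h0 : 0 < r0) (h01 : r0 ≤ 1) (hs : r0 ≤ s) :
    wbar W s ≤ 2 * (1 / r0) ^ d * W 1 := by
  have hs0 : 0 < s := lt_of_lt_of_le h0 hs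
  unfold wbar
  by_cases hs1 : s < 1
  · rw [if_pos hs1]
    calc W s ≤ 2 * (1 / s) ^ d * W 1 := hWd s 1 hs0 hs1.le le_rfl
      _ ≤ 2 * (1 / r0) ^ d * W 1 := by
          have h1 : (1:ℝ) / s ≤ 1 / r0 := by gcongr
          have := hW0 1
          gcongr
  · rw [if_neg hs1]
    refine le_mul_of_one_le_left (hW0 1) ?_
    have h1 : (1:ℝ) ≤ 1 / r0 := (one_le_div h0).2 h01
    calc (1:ℝ) ≤ (1/r0) ^ d := one_le_pow₀ h1
      _ ≤ 2 * (1/r0) ^ d := by nlinarith [pow_nonneg (le_trans zero_le_one h1) d]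

end toscsec

section toscsec2

variable {κ γ : ℝ} {d : ℕ}

lemma q_pos (hκ0 : 0 < κ) : 0 < κ ^ γ := Real.rpow_pos_of_pos hκ0 γ

lemma q_lt_one (hκ0 : 0 < κ) (hκ : κ ≤ 1/2) (hγ0 : 0 < γ) : κ ^ γ < 1 :=
  Real.rpow_lt_one hκ0.le (lt_of_le_of_lt hκ (by norm_num)) hγ0

lemma arg_pos (hκ0 : 0 < κ) {r : ℝ} (hr : 0 < r) (i : ℕ) : 0 < r / κ ^ (i+1) :=
  div_pos hr (pow_pos hκ0 _)

lemma arg_ge (hκ0 : 0 < κ) (hκ1 : κ ≤ 1) {r : ℝ} (hr : 0 < r) (i : ℕ) :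
    r ≤ r / κ ^ (i+1) := by
  rw [le_div_iff₀ (pow_pos hκ0 _)]
  calc r * κ ^ (i+1) ≤ r * 1 := by
        have := pow_le_one₀ hκ0.le hκ1 (n := i+1)
        nlinarith
    _ = r := mul_one r

set_option maxHeartbeats 1000000 in
lemma summable_tosc_terms (hκ0 : 0 < κ) (hκ : κ ≤ 1/2) (hγ0 : 0 < γ)
    {W : ℝ → ℝ} (hW0 : ∀ s, 0 ≤ W s)
    (hWd : ∀ a b : ℝ, 0 < a → a ≤ b → b ≤ 1 → W a ≤ 2 * (b / a) ^ d * W b)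
    {r : ℝ} (hr : 0 < r) :
    Summable fun i : ℕ => κ ^ (γ * (i + 1 : ℕ)) * wbar W (r / κ ^ (i + 1)) := by
  have hκ1 : κ ≤ 1 := le_trans hκ (by norm_num)
  set q := κ ^ γ with hq
  have hq0 := q_pos (γ := γ) hκ0
  have hq1 := q_lt_one hκ0 hκ hγ0
  set r0 := min r 1 with hr0
  have h0 : 0 < r0 := lt_min hr one_pos
  have h01 : r0 ≤ 1 := min_le_right _ _
  set M := 2 * (1 / r0) ^ d * W 1 with hM
  have hM0 : 0 ≤ M := by
    have := hW0 1
    positivity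
  refine Summable.of_nonneg_of_le (f := fun i => (M * q) * q ^ i)
    (fun i => mul_nonneg (le_of_lt (by rw [coef_eq hκ0]; positivity))
      (wbar_nonneg hW0 _)) (fun i => ?_) ?_
  · rw [coef_eq hκ0, ← hq]
    have harg : r0 ≤ r / κ ^ (i+1) := le_trans (min_le_left _ _) (arg_ge hκ0 hκ1 hr i)
    have hwb := wbar_le_of_ge (d := d) hW0 hWd h0 h01 harg
    calc q ^ (i+1) * wbar W (r / κ ^ (i + 1)) ≤ q ^ (i+1) * M := by
          exact mul_le_mul_of_nonneg_left hwb (by positivity)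
      _ = (M * q) * q ^ i := by rw [pow_succ]; ring
  · exact (summable_geometric_of_lt_one hq0.le hq1).mul_left _

lemma tosc_nonneg' {W : ℝ → ℝ} (hκ0 : 0 < κ) (hW0 : ∀ s, 0 ≤ W s) (r : ℝ) :
    0 ≤ tosc κ γ W r := by
  rw [tosc_eq_wbar]
  refine tsum_nonneg fun i => mul_nonneg ?_ (wbar_nonneg hW0 _)
  rw [coef_eq hκ0]; positivity

lemma tosc_le_tosc (hκ0 : 0 < κ) (hκ : κ ≤ 1/2) (hγ0 : 0 < γ)
    {V W : ℝ → ℝ} (hV0 : ∀ s, 0 ≤ V s) (hW0 : ∀ s, 0 ≤ W s)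
    (hVd : ∀ a b : ℝ, 0 < a → a ≤ b → b ≤ 1 → V a ≤ 2 * (b / a) ^ d * V b)
    (hWd : ∀ a b : ℝ, 0 < a → a ≤ b → b ≤ 1 → W a ≤ 2 * (b / a) ^ d * W b)
    (hVW : ∀ s, 0 < s → s ≤ 1 → V s ≤ W s) {r : ℝ} (hr : 0 < r) :
    tosc κ γ V r ≤ tosc κ γ W r := by
  rw [tosc_eq_wbar, tosc_eq_wbar]
  refine (summable_tosc_terms hκ0 hκ hγ0 hV0 hVd hr).tsum_le_tsum (fun i => ?_)
    (summable_tosc_terms hκ0 hκ hγ0 hW0 hWd hr)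
  have hcoef : 0 ≤ κ ^ (γ * (i + 1 : ℕ)) := by rw [coef_eq hκ0]; positivity
  refine mul_le_mul_of_nonneg_left ?_ hcoef
  unfold wbar
  split
  · exact hVW _ (arg_pos hκ0 hr i) (by linarith [show r / κ ^ (i+1) < 1 from by assumption])
  · exact hVW 1 one_pos le_rfl

lemma tosc_double (hκ0 : 0 < κ) (hκ : κ ≤ 1/2) (hγ0 : 0 < γ)
    {W : ℝ → ℝ} (hW0 : ∀ s, 0 ≤ W s)
    (hWd : ∀ a b : ℝ, 0 < a → a ≤ b → b ≤ 1 → W a ≤ 2 * (b / a) ^ d * W b)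
    {a b : ℝ} (ha : 0 < a) (hab : a ≤ b) :
    tosc κ γ W a ≤ 2 * (b / a) ^ d * tosc κ γ W b := by
  have hb : 0 < b := ha.trans_le hab
  rw [tosc_eq_wbar, tosc_eq_wbar, ← tsum_mul_left]
  refine (summable_tosc_terms hκ0 hκ hγ0 hW0 hWd ha).tsum_le_tsum (fun i => ?_)
    ((summable_tosc_terms hκ0 hκ hγ0 hW0 hWd hb).mul_left _)
  have hcoef : 0 ≤ κ ^ (γ * (i + 1 : ℕ)) := by rw [coef_eq hκ0]; positivity
  have hratio : (b / κ ^ (i+1)) / (a / κ ^ (i+1)) = b / a := by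
    have h := pow_pos hκ0 (i+1)
    field_simp
  have h1 : wbar W (a / κ ^ (i+1)) ≤ 2 * (b / a) ^ d * wbar W (b / κ ^ (i+1)) := by
    have := wbar_double (d := d) hW0 hWd (arg_pos hκ0 ha i)
      (by gcongr : a / κ ^ (i+1) ≤ b / κ ^ (i+1))
    rwa [hratio] at this
  calc κ ^ (γ * (i + 1 : ℕ)) * wbar W (a / κ ^ (i+1))
      ≤ κ ^ (γ * (i + 1 : ℕ)) * (2 * (b / a) ^ d * wbar W (b / κ ^ (i+1))) :=
        mul_le_mul_of_nonneg_left h1 hcoef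
    _ = 2 * (b / a) ^ d * (κ ^ (γ * (i + 1 : ℕ)) * wbar W (b / κ ^ (i+1))) := by ring

lemma tosc_shift (hκ0 : 0 < κ) (hκ : κ ≤ 1/2) (hγ0 : 0 < γ)
    {W : ℝ → ℝ} (hW0 : ∀ s, 0 ≤ W s)
    (hWd : ∀ a b : ℝ, 0 < a → a ≤ b → b ≤ 1 → W a ≤ 2 * (b / a) ^ d * W b)
    {r : ℝ} (hr : 0 < r) :
    tosc κ γ W r ≤ (κ ^ γ)⁻¹ * tosc κ γ W (κ * r) := by
  set q := κ ^ γ with hq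
  have hq0 := q_pos (γ := γ) hκ0
  set T : ℕ → ℝ := fun i => κ ^ (γ * (i + 1 : ℕ)) * wbar W (κ * r / κ ^ (i + 1)) with hT
  have hsumT : Summable T := summable_tosc_terms hκ0 hκ hγ0 hW0 hWd (by positivity)
  have hTnn : ∀ i, 0 ≤ T i := fun i =>
    mul_nonneg (by rw [coef_eq hκ0]; positivity) (wbar_nonneg hW0 _)
  have hkey : ∀ i : ℕ, κ ^ (γ * (i + 1 : ℕ)) * wbar W (r / κ ^ (i + 1)) = q⁻¹ * T (i+1) := by
    intro i
    have harg : κ * r / κ ^ (i + 1 + 1) = r / κ ^ (i + 1) := by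
      rw [pow_succ]
      field_simp
    rw [hT]
    simp only [harg]
    rw [coef_eq hκ0, coef_eq hκ0, ← hq, pow_succ (q) (i+1)]
    field_simp
    rw [mul_div_cancel_right₀ _ (show q ≠ 0 from hq0.ne')]
  have hsum1 : Summable fun i : ℕ => T (i+1) := by
    have := hsumT.comp_injective (Nat.succ_injective)
    exact this
  calc tosc κ γ W r = ∑' i : ℕ, q⁻¹ * T (i+1) := by
        rw [tosc_eq_wbar]; exact tsum_congr hkey
    _ = q⁻¹ * ∑' i : ℕ, T (i+1) := tsum_mul_left
    _ ≤ q⁻¹ * ∑' i : ℕ, T i := by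
        refine mul_le_mul_of_nonneg_left ?_ (by positivity)
        exact hsum1.tsum_le_tsum_of_inj Nat.succ Nat.succ_injective (fun c _ => hTnn c)
          (fun i => le_rfl) hsumT
    _ = (κ ^ γ)⁻¹ * tosc κ γ W (κ * r) := by rw [tosc_eq_wbar, ← hq]

end toscsec2

section partone

variable {κ γ : ℝ} {d : ℕ}

set_option maxHeartbeats 1000000 in
lemma tosc_integrableOn (hκ0 : 0 < κ) (hκ : κ ≤ 1/2) (hγ0 : 0 < γ)
    {W : ℝ → ℝ} (hW0 : ∀ s, 0 ≤ W s)
    (hWd : ∀ a b : ℝ, 0 < a → a ≤ b → b ≤ 1 → W a ≤ 2 * (b / a) ^ d * W b)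
    (hInt : IntegrableOn (fun t => W t / t) (Ioc (0:ℝ) 1)) :
    IntegrableOn (fun t => tosc κ γ W t / t) (Ioc (0:ℝ) 1) := by
  have hκ1 : κ < 1 := lt_of_le_of_lt hκ (by norm_num)
  set q := κ ^ γ with hq
  have hq0 : 0 < q := q_pos (γ := γ) hκ0
  have hq1 : q < 1 := q_lt_one hκ0 hκ hγ0
  set g := (Ioc (0:ℝ) 1).indicator (fun t => W t / t) with hgdef
  have hg : Integrable g := (integrable_indicator_iff measurableSet_Ioc).2 hInt
  set D := ∫ t : ℝ, ‖g t‖ with hD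
  have hD0 : 0 ≤ D := integral_nonneg fun t => norm_nonneg _
  set L := Real.log κ⁻¹ with hL
  have hL0 : 0 < L := Real.log_pos ((one_lt_inv₀ hκ0).2 hκ1)
  set F : ℕ → ℝ → ℝ := fun i t => κ ^ (γ * (i + 1 : ℕ)) * wbar W (t / κ ^ (i + 1)) / t
    with hF
  have hcoefpos : ∀ i : ℕ, 0 < κ ^ (γ * (i + 1 : ℕ)) := by
    intro i; rw [coef_eq hκ0]; positivity
  have hFnn : ∀ i : ℕ, ∀ t ∈ Ioc (0:ℝ) 1, 0 ≤ F i t := by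
    intro i t ht
    exact div_nonneg (mul_nonneg (hcoefpos i).le (wbar_nonneg hW0 _)) ht.1.le
  set B : ℕ → ℝ := fun i => q ^ (i+1) * D + ((i+1 : ℕ) : ℝ) * q ^ (i+1) * (‖W 1‖ * L)
    with hB
  have hBnn : ∀ i, 0 ≤ B i := by
    intro i
    have : (0:ℝ) ≤ ((i+1 : ℕ) : ℝ) := Nat.cast_nonneg _
    positivity
  have key : ∀ i : ℕ, IntegrableOn (F i) (Ioc (0:ℝ) 1) ∧
      ∫ t in Ioc (0:ℝ) 1, ‖F i t‖ ≤ B i := by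
    intro i
    set c := κ ^ (i+1) with hc
    have hc0 : 0 < c := pow_pos hκ0 _
    have hc1 : c ≤ 1 := (pow_le_one₀ hκ0.le hκ1.le)
    set a1 : ℝ := κ ^ (γ * (i + 1 : ℕ)) / c with ha1
    have ha10 : 0 < a1 := div_pos (hcoefpos i) hc0
    set G1 : ℝ → ℝ := fun t => a1 * g (t / c) with hG1def
    have hG1 : Integrable G1 := ((integrable_comp_div_iff g hc0.ne').2 hg).const_mul a1
    have heq1 : EqOn (F i) G1 (Ioc 0 c) := by
      intro t ht
      have ht0 : 0 < t := ht.1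
      have htc0 : 0 < t / c := div_pos ht0 hc0
      have htc1 : t / c ≤ 1 := (div_le_one hc0).2 ht.2
      have hgval : g (t/c) = W (t/c) / (t/c) := by
        rw [hgdef]
        exact indicator_of_mem (Set.mem_Ioc.2 ⟨htc0, htc1⟩) _
      have hwb : wbar W (t/c) = (t/c) * g (t/c) := by
        rw [hgval]
        unfold wbar
        rcases lt_or_eq_of_le htc1 with h | h
        · rw [if_pos h, mul_div_cancel₀ _ htc0.ne']
        · rw [h, if_neg (lt_irrefl 1)]
          norm_num
      show F i t = G1 t
      rw [hF, hG1def]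
      dsimp only
      rw [hwb, ha1]
      field_simp
    have hF1int : IntegrableOn (F i) (Ioc 0 c) :=
      (hG1.integrableOn).congr_fun heq1.symm measurableSet_Ioc
    have hI1 : ∫ t in Ioc (0:ℝ) c, ‖F i t‖ ≤ q ^ (i+1) * D := by
      have e1 : ∫ t in Ioc (0:ℝ) c, ‖F i t‖ = ∫ t in Ioc (0:ℝ) c, ‖G1 t‖ :=
        setIntegral_congr_fun measurableSet_Ioc fun t ht => by rw [heq1 ht]
      have e2 : ∫ t in Ioc (0:ℝ) c, ‖G1 t‖ ≤ ∫ t : ℝ, ‖G1 t‖ :=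
        setIntegral_le_integral hG1.norm (Filter.Eventually.of_forall fun t => norm_nonneg _)
      have e3 : ∫ t : ℝ, ‖G1 t‖ = a1 * (c * D) := by
        have : ∀ t : ℝ, ‖G1 t‖ = a1 * ‖g (t/c)‖ := by
          intro t
          rw [hG1def]
          dsimp only
          rw [norm_mul, Real.norm_eq_abs (a1), abs_of_pos ha10]
        simp_rw [this]
        rw [integral_const_mul]
        have := MeasureTheory.Measure.integral_comp_div (fun t => ‖g t‖) c
        rw [this, smul_eq_mul, abs_of_pos hc0, ← hD]
      have e4 : a1 * (c * D) = q ^ (i+1) * D := by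
        rw [ha1, coef_eq hκ0, ← hq]
        field_simp
      linarith [e2, e3.le]
    set G2 : ℝ → ℝ := fun t => κ ^ (γ * (i + 1 : ℕ)) * W 1 / t with hG2def
    have heq2 : EqOn (F i) G2 (Ioc c 1) := by
      intro t ht
      have htc : (1:ℝ) < t / c := (one_lt_div hc0).2 ht.1
      show F i t = G2 t
      rw [hF, hG2def]
      dsimp only
      rw [wbar, if_neg (not_lt.2 htc.le)]
    have hG2 : IntegrableOn G2 (Ioc c 1) := by
      refine (ContinuousOn.integrableOn_compact isCompact_Icc ?_).mono_set Ioc_subset_Icc_self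
      exact continuousOn_const.div continuousOn_id
        (fun x hx => ne_of_gt (lt_of_lt_of_le hc0 hx.1))
    have hF2int : IntegrableOn (F i) (Ioc c 1) :=
      hG2.congr_fun heq2.symm measurableSet_Ioc
    have hinv : ∫ t in Ioc c 1, t⁻¹ = ((i+1 : ℕ) : ℝ) * L := by
      rw [← intervalIntegral.integral_of_le hc1, integral_inv]
      · rw [one_div, Real.log_inv, hc, Real.log_pow, hL, Real.log_inv]
        push_cast
        ring
      · rw [uIcc_of_le hc1]
        intro h0
        exact absurd h0.1 (not_le.2 hc0)
    have hI2 : ∫ t in Ioc c 1, ‖F i t‖ ≤ ((i+1 : ℕ) : ℝ) * q ^ (i+1) * (‖W 1‖ * L) := by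
      have e1 : ∫ t in Ioc c 1, ‖F i t‖
          = ∫ t in Ioc c 1, (κ ^ (γ * (i + 1 : ℕ)) * ‖W 1‖) * t⁻¹ := by
        refine setIntegral_congr_fun measurableSet_Ioc fun t ht => ?_
        have ht0 : 0 < t := lt_trans hc0 ht.1
        rw [heq2 ht, hG2def]
        dsimp only
        rw [div_eq_mul_inv, norm_mul, norm_mul]
        simp only [Real.norm_eq_abs]
        rw [abs_of_pos (hcoefpos i), abs_of_pos (inv_pos.2 ht0)]
      rw [e1, integral_const_mul, hinv, coef_eq hκ0, ← hq]
      have hW1 : 0 ≤ ‖W 1‖ := norm_nonneg _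
      nlinarith [pow_pos hq0 (i+1), hL0, mul_nonneg hW1 hL0.le,
        mul_nonneg (Nat.cast_nonneg (i+1) : (0:ℝ) ≤ ((i+1:ℕ):ℝ)) (mul_nonneg hW1 hL0.le)]
    have hsplit : Ioc (0:ℝ) 1 = Ioc 0 c ∪ Ioc c 1 := (Ioc_union_Ioc_eq_Ioc hc0.le hc1).symm
    have hdisj : Disjoint (Ioc (0:ℝ) c) (Ioc c 1) := by
      rw [Set.Ioc_disjoint_Ioc, min_eq_left hc1, max_eq_right hc0.le]
    constructor
    · rw [hsplit]
      exact hF1int.union hF2int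
    · rw [hsplit, setIntegral_union hdisj measurableSet_Ioc hF1int.norm hF2int.norm, hB]
      exact add_le_add hI1 hI2
  -- summability of the bounds
  have hgeom : Summable (fun i : ℕ => q ^ (i+1)) := by
    refine ((summable_geometric_of_lt_one hq0.le hq1).mul_left q).congr fun i => ?_
    rw [pow_succ]; ring
  have hgeom2 : Summable (fun i : ℕ => ((i+1:ℕ) : ℝ) * q ^ (i+1)) := by
    have h0 : Summable (fun n : ℕ => (n : ℝ) * q ^ n) := by
      have := summable_pow_mul_geometric_of_norm_lt_one 1 (r := q)
        (by rwa [Real.norm_eq_abs, abs_of_pos hq0])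
      refine this.congr fun n => ?_
      rw [pow_one]
    have h1 := h0.comp_injective Nat.succ_injective
    refine h1.congr fun i => ?_
    rfl
  have hBsum : Summable B := by
    rw [hB]
    exact (hgeom.mul_right D).add ((hgeom2.mul_right (‖W 1‖ * L)).congr
      (fun i => by ring))
  -- ENNReal machinery
  set μr := volume.restrict (Ioc (0:ℝ) 1) with hμr
  have hFint : ∀ i, Integrable (F i) μr := fun i => (key i).1
  have hFm : ∀ i, AEStronglyMeasurable (F i) μr := fun i => (hFint i).aestronglyMeasurable
  set Φ : ℝ → ENNReal := fun t => ∑' i : ℕ, ENNReal.ofReal (F i t) with hΦ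
  have hφm : ∀ i : ℕ, AEMeasurable (fun t => ENNReal.ofReal (F i t)) μr := fun i =>
    ((hFm i).aemeasurable).ennreal_ofReal
  have hΦm : AEMeasurable Φ μr := AEMeasurable.ennreal_tsum hφm
  have hnn_ae : ∀ i : ℕ, 0 ≤ᵐ[μr] F i := fun i =>
    (ae_restrict_iff' measurableSet_Ioc).2 (Filter.Eventually.of_forall (hFnn i))
  have hper : ∀ i : ℕ, ∫⁻ t, ENNReal.ofReal (F i t) ∂μr ≤ ENNReal.ofReal (B i) := by
    intro i
    rw [← ofReal_integral_eq_lintegral_ofReal (hFint i) (hnn_ae i)]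
    apply ENNReal.ofReal_le_ofReal
    calc ∫ t, F i t ∂μr ≤ ∫ t, ‖F i t‖ ∂μr :=
          integral_mono (hFint i) (hFint i).norm fun t => le_abs_self _
      _ ≤ B i := (key i).2
  have hfin : ∫⁻ t, Φ t ∂μr ≠ ⊤ := by
    rw [hΦ]
    rw [lintegral_tsum hφm]
    refine ne_top_of_le_ne_top ?_ (ENNReal.tsum_le_tsum hper)
    rw [← ENNReal.ofReal_tsum_of_nonneg hBnn hBsum]
    exact ENNReal.ofReal_ne_top
  have hae_lt : ∀ᵐ t ∂μr, Φ t < ⊤ := ae_lt_top' hΦm hfin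
  have heqpt : ∀ t ∈ Ioc (0:ℝ) 1, tosc κ γ W t / t = (Φ t).toReal := by
    intro t ht
    have h1 : (Φ t).toReal = ∑' i : ℕ, F i t := by
      rw [hΦ]
      rw [ENNReal.tsum_toReal_eq (fun i => ENNReal.ofReal_ne_top)]
      exact tsum_congr fun i => ENNReal.toReal_ofReal (hFnn i t ht)
    rw [h1, tosc_eq_wbar, div_eq_mul_inv, ← tsum_mul_right]
    exact tsum_congr fun i => (div_eq_mul_inv _ _).symm
  have haeeq : (fun t => tosc κ γ W t / t) =ᵐ[μr] fun t => (Φ t).toReal :=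
    (ae_restrict_iff' measurableSet_Ioc).2 (Filter.Eventually.of_forall heqpt)
  refine ⟨((ENNReal.measurable_toReal.comp_aemeasurable hΦm).aestronglyMeasurable).congr
    haeeq.symm, ?_⟩
  rw [hasFiniteIntegral_iff_norm]
  have hlcongr : ∫⁻ t, ENNReal.ofReal ‖tosc κ γ W t / t‖ ∂μr = ∫⁻ t, Φ t ∂μr := by
    apply lintegral_congr_ae
    filter_upwards [haeeq, hae_lt] with t h1 h2
    rw [h1, Real.norm_eq_abs, abs_of_nonneg ENNReal.toReal_nonneg,
      ENNReal.ofReal_toReal h2.ne]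
  rw [hlcongr]
  exact lt_top_iff_ne_top.2 hfin

end partone


/-- Lemma 8.1 (a) for full mean oscillations: if `f ∈ L¹(B_6)` satisfies the Dini condition,
then `ω̃_{f,B_4}` also satisfies it, and for a constant `C = C(d, γ, κ)`,
`∑_{j=0}^∞ ω̃_{f,B_3}(κ^j r) ≤ C ∫_0^r ω̃_{f,B_4}(t)/t dt` for all `r ∈ (0,1]`. -/
theorem stmt_6 (d : ℕ) (hd : 2 ≤ d) (γ κ : ℝ) (hγ : γ ∈ Ioo (0 : ℝ) 1)
    (hκ : κ ∈ Ioc (0 : ℝ) (1 / 2)) :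
    ∃ C > 0, ∀ f : EuclideanSpace ℝ (Fin d) → ℝ,
      IntegrableOn f (ball 0 6) →
      IntegrableOn (fun t => mOsc d f 4 t / t) (Ioc (0 : ℝ) 1) →
      IntegrableOn (fun t => tosc κ γ (mOsc d f 4) t / t) (Ioc (0 : ℝ) 1) ∧
      ∀ r ∈ Ioc (0 : ℝ) 1,
        (Summable fun j : ℕ => tosc κ γ (mOsc d f 3) (κ ^ j * r)) ∧
        ∑' j : ℕ, tosc κ γ (mOsc d f 3) (κ ^ j * r) ≤
          C * ∫ t in Ioc (0 : ℝ) r, tosc κ γ (mOsc d f 4) t / t := by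
  obtain ⟨hκ0, hκ12⟩ := hκ
  obtain ⟨hγ0, hγ1⟩ := hγ
  have hκ1 : κ < 1 := lt_of_le_of_lt hκ12 (by norm_num)
  have hq0 : 0 < κ ^ γ := q_pos hκ0
  set q := κ ^ γ with hq
  set L := Real.log κ⁻¹ with hL
  have hL0 : 0 < L := Real.log_pos ((one_lt_inv₀ hκ0).2 hκ1)
  set Cd : ℝ := 2 * q⁻¹ * (κ⁻¹) ^ d with hCd
  have hCd0 : 0 < Cd := by positivity
  refine ⟨Cd / L, by positivity, ?_⟩
  intro f hf6 hInt
  set W := mOsc d f 4 with hWdef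
  set V := mOsc d f 3 with hVdef
  have hW0 : ∀ s, 0 ≤ W s := fun s => mOsc_nonneg f 4 s
  have hV0 : ∀ s, 0 ≤ V s := fun s => mOsc_nonneg f 3 s
  have hWd : ∀ a b : ℝ, 0 < a → a ≤ b → b ≤ 1 → W a ≤ 2 * (b/a) ^ d * W b :=
    fun a b ha hab hb1 => mOsc_double hd (by norm_num) (by norm_num) ha hab hb1 hf6
  have hVd : ∀ a b : ℝ, 0 < a → a ≤ b → b ≤ 1 → V a ≤ 2 * (b/a) ^ d * V b :=
    fun a b ha hab hb1 => mOsc_double hd (by norm_num) (by norm_num) ha hab hb1 hf6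
  have hVW : ∀ s, 0 < s → s ≤ 1 → V s ≤ W s := fun s hs hs1 =>
    mOsc_three_le_four hd hs hs1 hf6
  have hoInt : IntegrableOn (fun t => tosc κ γ W t / t) (Ioc (0:ℝ) 1) :=
    tosc_integrableOn hκ0 hκ12 hγ0 hW0 hWd hInt
  refine ⟨hoInt, ?_⟩
  rintro r ⟨hr0, hr1⟩
  have hκpow : ∀ j : ℕ, 0 < κ ^ j * r := fun j => mul_pos (pow_pos hκ0 j) hr0
  have hstep : ∀ j : ℕ, κ ^ (j+1) * r ≤ κ ^ j * r := fun j =>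
    mul_le_mul_of_nonneg_right
      (pow_le_pow_of_le_one hκ0.le hκ1.le (Nat.le_succ j)) hr0.le
  have hupper : ∀ j : ℕ, κ ^ j * r ≤ r := fun j => by
    calc κ ^ j * r ≤ 1 * r :=
          mul_le_mul_of_nonneg_right (pow_le_one₀ hκ0.le hκ1.le) hr0.le
      _ = r := one_mul r
  have hsub : ∀ j : ℕ, Ioc (κ^(j+1)*r) (κ^j*r) ⊆ Ioc (0:ℝ) r := fun j =>
    Ioc_subset_Ioc (hκpow (j+1)).le (hupper j)
  have hsub1 : ∀ j : ℕ, Ioc (κ^(j+1)*r) (κ^j*r) ⊆ Ioc (0:ℝ) 1 := fun j =>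
    (hsub j).trans (Ioc_subset_Ioc le_rfl hr1)
  have hIj_int : ∀ j : ℕ, IntegrableOn (fun t => tosc κ γ W t / t)
      (Ioc (κ^(j+1)*r) (κ^j*r)) := fun j => hoInt.mono_set (hsub1 j)
  have hpoint : ∀ j : ℕ, ∀ t ∈ Ioc (κ^(j+1)*r) (κ^j*r),
      tosc κ γ W (κ^j*r) ≤ Cd * tosc κ γ W t := by
    intro j t ht
    have ht0 : 0 < t := lt_trans (hκpow (j+1)) ht.1
    have h1 : tosc κ γ W (κ^j*r) ≤ q⁻¹ * tosc κ γ W (κ*(κ^j*r)) :=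
      tosc_shift hκ0 hκ12 hγ0 hW0 hWd (hκpow j)
    have heq : κ*(κ^j*r) = κ^(j+1)*r := by rw [pow_succ]; ring
    rw [heq] at h1
    have h2 : tosc κ γ W (κ^(j+1)*r) ≤ 2 * (t/(κ^(j+1)*r)) ^ d * tosc κ γ W t :=
      tosc_double hκ0 hκ12 hγ0 hW0 hWd (hκpow (j+1)) ht.1.le
    have h3 : (t/(κ^(j+1)*r)) ^ d ≤ (κ⁻¹) ^ d := by
      apply pow_le_pow_left₀ (div_nonneg ht0.le (hκpow (j+1)).le)
      rw [div_le_iff₀ (hκpow (j+1))]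
      calc t ≤ κ^j * r := ht.2
        _ = κ⁻¹ * (κ^(j+1)*r) := by
            rw [pow_succ]
            field_simp
    have h4 : 0 ≤ tosc κ γ W t := tosc_nonneg' hκ0 hW0 t
    have h5 : 2 * (t/(κ^(j+1)*r)) ^ d * tosc κ γ W t ≤ 2 * (κ⁻¹) ^ d * tosc κ γ W t := by
      nlinarith [mul_le_mul_of_nonneg_right h3 h4]
    calc tosc κ γ W (κ^j*r) ≤ q⁻¹ * (2 * (t/(κ^(j+1)*r)) ^ d * tosc κ γ W t) :=
          le_trans h1 (mul_le_mul_of_nonneg_left h2 (inv_nonneg.2 hq0.le))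
      _ ≤ q⁻¹ * (2 * (κ⁻¹) ^ d * tosc κ γ W t) :=
          mul_le_mul_of_nonneg_left h5 (inv_nonneg.2 hq0.le)
      _ = Cd * tosc κ γ W t := by rw [hCd]; ring
  have hlow : ∀ j : ℕ, Cd⁻¹ * tosc κ γ W (κ^j*r) * L ≤
      ∫ t in Ioc (κ^(j+1)*r) (κ^j*r), tosc κ γ W t / t := by
    intro j
    have hconst_int : IntegrableOn (fun t => (Cd⁻¹ * tosc κ γ W (κ^j*r)) * t⁻¹)
        (Ioc (κ^(j+1)*r) (κ^j*r)) := by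
      refine (ContinuousOn.integrableOn_compact isCompact_Icc ?_).mono_set
        Ioc_subset_Icc_self
      exact continuousOn_const.mul (continuousOn_id.inv₀
        (fun x hx => ne_of_gt (lt_of_lt_of_le (hκpow (j+1)) hx.1)))
    have hinv : ∫ t in Ioc (κ^(j+1)*r) (κ^j*r), t⁻¹ = L := by
      rw [← intervalIntegral.integral_of_le (hstep j), integral_inv]
      · have hrat : (κ^j*r) / (κ^(j+1)*r) = κ⁻¹ := by
          rw [pow_succ]
          field_simp
        rw [hrat, hL]
      · rw [uIcc_of_le (hstep j)]
        rintro ⟨h1, h2⟩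
        exact absurd h1 (not_le.2 (hκpow (j+1)))
    calc Cd⁻¹ * tosc κ γ W (κ^j*r) * L
        = ∫ t in Ioc (κ^(j+1)*r) (κ^j*r), (Cd⁻¹ * tosc κ γ W (κ^j*r)) * t⁻¹ := by
          rw [integral_const_mul, hinv]
      _ ≤ ∫ t in Ioc (κ^(j+1)*r) (κ^j*r), tosc κ γ W t / t := by
          refine setIntegral_mono_on hconst_int (hIj_int j) measurableSet_Ioc ?_
          intro t ht
          have ht0 : 0 < t := lt_trans (hκpow (j+1)) ht.1
          have h6 : Cd⁻¹ * tosc κ γ W (κ^j*r) ≤ tosc κ γ W t :=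
            (inv_mul_le_iff₀ hCd0).2 (hpoint j t ht)
          rw [div_eq_mul_inv]
          exact mul_le_mul_of_nonneg_right h6 (inv_nonneg.2 ht0.le)
  have hdisjlt : ∀ i j : ℕ, i < j →
      Disjoint (Ioc (κ^(i+1)*r) (κ^i*r)) (Ioc (κ^(j+1)*r) (κ^j*r)) := by
    intro i j hij
    rw [Set.Ioc_disjoint_Ioc]
    have h7 : κ^j*r ≤ κ^(i+1)*r :=
      mul_le_mul_of_nonneg_right (pow_le_pow_of_le_one hκ0.le hκ1.le hij) hr0.le
    calc min (κ^i*r) (κ^j*r) ≤ κ^j*r := min_le_right _ _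
      _ ≤ κ^(i+1)*r := h7
      _ ≤ max (κ^(i+1)*r) (κ^(j+1)*r) := le_max_left _ _
  have hsum_le : ∀ N : ℕ, ∑ j ∈ Finset.range N,
      ∫ t in Ioc (κ^(j+1)*r) (κ^j*r), tosc κ γ W t / t ≤
      ∫ t in Ioc (0:ℝ) r, tosc κ γ W t / t := by
    intro N
    have hmeas : ∀ j ∈ Finset.range N, MeasurableSet (Ioc (κ^(j+1)*r) (κ^j*r)) :=
      fun _ _ => measurableSet_Ioc
    have hdisj : (↑(Finset.range N) : Set ℕ).Pairwise
        (Function.onFun Disjoint (fun j => Ioc (κ^(j+1)*r) (κ^j*r))) := by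
      intro i _ j _ hij
      rcases lt_or_gt_of_ne hij with h | h
      · exact hdisjlt i j h
      · exact (hdisjlt j i h).symm
    rw [← integral_biUnion_finset (Finset.range N) hmeas hdisj (fun j _ => hIj_int j)]
    refine setIntegral_mono_set (hoInt.mono_set (Ioc_subset_Ioc le_rfl hr1)) ?_ ?_
    · refine (ae_restrict_iff' measurableSet_Ioc).2 (Filter.Eventually.of_forall ?_)
      intro t ht
      exact div_nonneg (tosc_nonneg' hκ0 hW0 t) ht.1.le
    · exact HasSubset.Subset.eventuallyLE (iUnion₂_subset fun j _ => hsub j)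
  have hkey : ∀ N : ℕ, ∑ j ∈ Finset.range N, tosc κ γ V (κ ^ j * r) ≤
      (Cd / L) * ∫ t in Ioc (0:ℝ) r, tosc κ γ W t / t := by
    intro N
    set S := ∑ j ∈ Finset.range N, tosc κ γ W (κ ^ j * r) with hS
    set I := ∫ t in Ioc (0:ℝ) r, tosc κ γ W t / t with hI
    have h1 : ∑ j ∈ Finset.range N, tosc κ γ V (κ ^ j * r) ≤ S :=
      Finset.sum_le_sum fun j _ =>
        tosc_le_tosc hκ0 hκ12 hγ0 hV0 hW0 hVd hWd hVW (hκpow j)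
    have h2 : Cd⁻¹ * L * S ≤ I := by
      calc Cd⁻¹ * L * S = ∑ j ∈ Finset.range N, Cd⁻¹ * tosc κ γ W (κ ^ j * r) * L := by
            rw [hS, Finset.mul_sum]
            exact Finset.sum_congr rfl fun j _ => by ring
        _ ≤ ∑ j ∈ Finset.range N,
              ∫ t in Ioc (κ^(j+1)*r) (κ^j*r), tosc κ γ W t / t :=
            Finset.sum_le_sum fun j _ => hlow j
        _ ≤ I := hsum_le N
    have hb : 0 < Cd⁻¹ * L := by positivity
    have h3 : S ≤ (Cd⁻¹ * L)⁻¹ * I := by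
      have := mul_le_mul_of_nonneg_left h2 (inv_nonneg.2 hb.le)
      calc S = (Cd⁻¹ * L)⁻¹ * (Cd⁻¹ * L * S) := by field_simp
        _ ≤ (Cd⁻¹ * L)⁻¹ * I := this
    have h4 : (Cd⁻¹ * L)⁻¹ = Cd / L := by
      rw [mul_inv, inv_inv, div_eq_mul_inv]
    linarith [h1, h4 ▸ h3]
  have hsummable : Summable (fun j : ℕ => tosc κ γ V (κ ^ j * r)) :=
    summable_of_sum_range_le (fun j => tosc_nonneg' hκ0 hV0 _) hkey
  exact ⟨hsummable, hsummable.tsum_le_of_sum_range_le hkey⟩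
end
end

section
/- Let d ≥ 2 and λ ∈ (0,1], and for each α, β ∈ {1, …, d} let A^{αβ} be a real d×d matrix such that |A^{αβ}| ≤ λ^{−1} for all α, β and ∑_{α,β=1}^d A^{αβ} ξ_β · ξ_α ≥ λ ∑_{α=1}^d |ξ_α|^2 for all vectors ξ_1, …, ξ_d ∈ ℝ^d. Then there exists a constant C, depending only on d and λ, such that: for all vectors P_1, …, P_d ∈ ℝ^d, all q ∈ ℝ, and all ℓ ∈ ℝ satisfying ∑_{α=1}^d P_α^α = ℓ (where P_α^α denotes the α-th component of P_α), setting V := ∑_{β=1}^d A^{1β} P_β + q e_1, one has ∑_{α=1}^d |P_α| + |q| ≤ C ( |V| + ∑_{α=2}^d |P_α| + |ℓ| ). -/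
open Metric Set Finset
open scoped RealInnerProductSpace

noncomputable section
set_option maxHeartbeats 2000000

lemma stmt_17_aux {d : ℕ} (lam : ℝ) (hl0 : 0 < lam) (hl1 : lam ≤ 1)
    (A : Fin d → Fin d → (EuclideanSpace ℝ (Fin d) →L[ℝ] EuclideanSpace ℝ (Fin d)))
    (hA : ∀ α β, ‖A α β‖ ≤ lam⁻¹)
    (hell : ∀ ξ : Fin d → EuclideanSpace ℝ (Fin d),
        lam * ∑ α, ‖ξ α‖ ^ 2 ≤ ∑ α, ∑ β, ⟪A α β (ξ β), ξ α⟫)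
    (i0 : Fin d) (P : Fin d → EuclideanSpace ℝ (Fin d)) (q ℓ : ℝ)
    (hsum : (∑ α, P α α) = ℓ) :
    (∑ α, ‖P α‖) + |q| ≤ 20 * lam⁻¹ ^ 3 *
      (‖(∑ β, A i0 β (P β)) + q • EuclideanSpace.single i0 (1 : ℝ)‖ +
       (∑ α ∈ Finset.univ.erase i0, ‖P α‖) + |ℓ|) := by
  set μ := lam⁻¹ with hμdef
  have hμ0 : 0 < μ := inv_pos.mpr hl0
  have hμ1 : 1 ≤ μ := one_le_inv_iff₀.mpr ⟨hl0, hl1⟩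
  have hlamμ : lam * μ = 1 := mul_inv_cancel₀ hl0.ne'
  set e0 : EuclideanSpace ℝ (Fin d) := EuclideanSpace.single i0 (1 : ℝ) with he0def
  have he0 : ‖e0‖ = 1 := by simp [he0def, EuclideanSpace.norm_single]
  set V : EuclideanSpace ℝ (Fin d) := (∑ β, A i0 β (P β)) + q • e0 with hVdef
  set S : ℝ := ∑ α ∈ Finset.univ.erase i0, ‖P α‖ with hSdef
  have hS0 : 0 ≤ S := Finset.sum_nonneg fun _ _ => norm_nonneg _
  set R : ℝ := ‖V‖ + S + |ℓ| with hRdef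
  have hV0 : 0 ≤ ‖V‖ := norm_nonneg _
  have hR0 : 0 ≤ R := by rw [hRdef]; exact add_nonneg (add_nonneg hV0 hS0) (abs_nonneg ℓ)
  have hVR : ‖V‖ ≤ R := by rw [hRdef]; linarith [abs_nonneg ℓ]
  have hSR : S ≤ R := by rw [hRdef]; linarith [abs_nonneg ℓ]
  set x := ‖P i0‖ with hxdef
  have hx0 : 0 ≤ x := norm_nonneg _
  -- coordinate bound
  have hcoord : ∀ (y : EuclideanSpace ℝ (Fin d)) (i : Fin d), |y i| ≤ ‖y‖ := by
    intro y i
    calc |y i| = |⟪EuclideanSpace.single i (1 : ℝ), y⟫| := by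
          simp [EuclideanSpace.inner_single_left]
      _ ≤ ‖EuclideanSpace.single i (1 : ℝ)‖ * ‖y‖ := abs_real_inner_le_norm _ _
      _ = ‖y‖ := by simp [EuclideanSpace.norm_single]
  -- operator bound
  have hAb : ∀ β (y : EuclideanSpace ℝ (Fin d)), ‖A i0 β y‖ ≤ μ * ‖y‖ := by
    intro β y
    calc ‖A i0 β y‖ ≤ ‖A i0 β‖ * ‖y‖ := (A i0 β).le_opNorm y
      _ ≤ μ * ‖y‖ := by gcongr; exact hA i0 β
  -- coercivity at i0
  have hcoerc : lam * x ^ 2 ≤ ⟪A i0 i0 (P i0), P i0⟫ := by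
    set ξ : Fin d → EuclideanSpace ℝ (Fin d) := fun β => if β = i0 then P i0 else 0 with hξdef
    have hξ0 : ∀ b, b ≠ i0 → ξ b = 0 := fun b hb => if_neg hb
    have hξi : ξ i0 = P i0 := if_pos rfl
    have h := hell ξ
    have hL : (∑ α, ‖ξ α‖ ^ 2) = x ^ 2 := by
      rw [Finset.sum_eq_single i0]
      · rw [hξi]
      · intro b _ hb; rw [hξ0 b hb]; simp
      · simp
    have hR2 : (∑ α, ∑ β, ⟪A α β (ξ β), ξ α⟫) = ⟪A i0 i0 (P i0), P i0⟫ := by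
      rw [Finset.sum_eq_single i0]
      · rw [Finset.sum_eq_single i0]
        · rw [hξi]
        · intro b _ hb; rw [hξ0 b hb]; simp
        · simp
      · intro b _ hb
        apply Finset.sum_eq_zero
        intro c _
        rw [hξ0 b hb]
        simp
      · simp
    rw [hL, hR2] at h
    exact h
  -- inner product identity for V
  have hVin : ⟪V, P i0⟫ = (∑ β, ⟪A i0 β (P β), P i0⟫) + q * (P i0 i0) := by
    rw [hVdef, inner_add_left, sum_inner, real_inner_smul_left, he0def,
      EuclideanSpace.inner_single_left]
    simp
  have hsplit : (∑ β, ⟪A i0 β (P β), P i0⟫)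
      = ⟪A i0 i0 (P i0), P i0⟫ + ∑ β ∈ Finset.univ.erase i0, ⟪A i0 β (P β), P i0⟫ :=
    (Finset.add_sum_erase _ _ (Finset.mem_univ i0)).symm
  -- diagonal constraint
  have hP00 : |P i0 i0| ≤ |ℓ| + S := by
    have h1 : P i0 i0 + ∑ α ∈ Finset.univ.erase i0, P α α = ℓ := by
      rw [← hsum]; exact Finset.add_sum_erase _ (fun α => (P α α : ℝ)) (Finset.mem_univ i0)
    have h2 : |∑ α ∈ Finset.univ.erase i0, P α α| ≤ S := by
      refine (Finset.abs_sum_le_sum_abs _ _).trans ?_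
      exact Finset.sum_le_sum fun α _ => hcoord (P α) α
    calc |P i0 i0| = |ℓ - ∑ α ∈ Finset.univ.erase i0, P α α| := by
          rw [← h1]; ring_nf
      _ ≤ |ℓ| + |∑ α ∈ Finset.univ.erase i0, P α α| := abs_sub _ _
      _ ≤ |ℓ| + S := by linarith
  -- bound on |q|
  have hq : q = ⟪V, e0⟫ - ∑ β, ⟪A i0 β (P β), e0⟫ := by
    rw [hVdef, inner_add_left, sum_inner, real_inner_smul_left,
      real_inner_self_eq_norm_sq, he0]
    ring
  have hqb : |q| ≤ ‖V‖ + μ * x + μ * S := by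
    have h1 : |⟪V, e0⟫| ≤ ‖V‖ := by
      calc |⟪V, e0⟫| ≤ ‖V‖ * ‖e0‖ := abs_real_inner_le_norm _ _
        _ = ‖V‖ := by rw [he0, mul_one]
    have h2 : |∑ β, ⟪A i0 β (P β), e0⟫| ≤ μ * x + μ * S := by
      refine (Finset.abs_sum_le_sum_abs _ _).trans ?_
      have h3 : ∀ β, |⟪A i0 β (P β), e0⟫| ≤ μ * ‖P β‖ := by
        intro β
        calc |⟪A i0 β (P β), e0⟫| ≤ ‖A i0 β (P β)‖ * ‖e0‖ := abs_real_inner_le_norm _ _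
          _ = ‖A i0 β (P β)‖ := by rw [he0, mul_one]
          _ ≤ μ * ‖P β‖ := hAb β (P β)
      calc (∑ β, |⟪A i0 β (P β), e0⟫|) ≤ ∑ β, μ * ‖P β‖ :=
            Finset.sum_le_sum fun β _ => h3 β
        _ = μ * x + ∑ β ∈ Finset.univ.erase i0, μ * ‖P β‖ :=
            (Finset.add_sum_erase _ _ (Finset.mem_univ i0)).symm
        _ = μ * x + μ * S := by rw [← Finset.mul_sum]
    calc |q| ≤ |⟪V, e0⟫| + |∑ β, ⟪A i0 β (P β), e0⟫| := by
          rw [hq]; exact abs_sub _ _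
      _ ≤ ‖V‖ + (μ * x + μ * S) := by linarith
      _ = ‖V‖ + μ * x + μ * S := by ring
  -- main quadratic bound
  have hquad : lam * x ^ 2 ≤ (1 + 2 * μ) * R * x + μ * R ^ 2 := by
    have h1 : ⟪V, P i0⟫ ≤ ‖V‖ * x := real_inner_le_norm V (P i0)
    have h2 : |∑ β ∈ Finset.univ.erase i0, ⟪A i0 β (P β), P i0⟫| ≤ μ * S * x := by
      refine (Finset.abs_sum_le_sum_abs _ _).trans ?_
      calc (∑ β ∈ Finset.univ.erase i0, |⟪A i0 β (P β), P i0⟫|)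
          ≤ ∑ β ∈ Finset.univ.erase i0, μ * ‖P β‖ * x := by
            refine Finset.sum_le_sum fun β _ => ?_
            calc |⟪A i0 β (P β), P i0⟫| ≤ ‖A i0 β (P β)‖ * x := abs_real_inner_le_norm _ _
              _ ≤ μ * ‖P β‖ * x := by
                  have := hAb β (P β); nlinarith [norm_nonneg (A i0 β (P β))]
        _ = μ * S * x := by rw [← Finset.sum_mul, ← Finset.mul_sum]
    have h3 : -(q * P i0 i0) ≤ |q| * (|ℓ| + S) := by
      calc -(q * P i0 i0) ≤ |q * P i0 i0| := neg_le_abs _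
        _ = |q| * |P i0 i0| := abs_mul _ _
        _ ≤ |q| * (|ℓ| + S) := by
            have := abs_nonneg q
            nlinarith [hP00]
    have key : ⟪A i0 i0 (P i0), P i0⟫
        = ⟪V, P i0⟫ - q * P i0 i0 - ∑ β ∈ Finset.univ.erase i0, ⟪A i0 β (P β), P i0⟫ := by
      rw [hVin, hsplit]; ring
    have h4 : lam * x ^ 2 ≤ ‖V‖ * x + |q| * (|ℓ| + S) + μ * S * x := by
      have h5 : -(∑ β ∈ Finset.univ.erase i0, ⟪A i0 β (P β), P i0⟫) ≤ μ * S * x := by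
        have := neg_le_abs (∑ β ∈ Finset.univ.erase i0, ⟪A i0 β (P β), P i0⟫)
        linarith
      rw [key] at hcoerc
      linarith [hcoerc]
    -- now substitute q bound
    have hlS : |ℓ| + S ≤ R := by rw [hRdef]; linarith
    have h6 : |q| * (|ℓ| + S) ≤ (‖V‖ + μ * x + μ * S) * R := by
      have hq0 := abs_nonneg q
      nlinarith [hqb, hlS, hx0, hS0, hV0, hR0]
    have h7a : ‖V‖ + S ≤ R := by rw [hRdef]; linarith [abs_nonneg ℓ]
    have h7b : μ * (‖V‖ + S) ≤ μ * R := mul_le_mul_of_nonneg_left h7a hμ0.le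
    have hVS : ‖V‖ + μ * S ≤ μ * R := by
      nlinarith [mul_nonneg (sub_nonneg.mpr hμ1) hV0]
    have h7 : (‖V‖ + μ * x + μ * S) * R ≤ μ * R * R + μ * x * R := by
      nlinarith [mul_le_mul_of_nonneg_right hVS hR0]
    have h8 : ‖V‖ * x ≤ R * x := mul_le_mul_of_nonneg_right hVR hx0
    have h9 : μ * S * x ≤ μ * R * x :=
      mul_le_mul_of_nonneg_right (mul_le_mul_of_nonneg_left hSR hμ0.le) hx0
    nlinarith [h4, h6, h7, h8, h9]
  -- extract linear bound on x
  have hx : x ≤ 4 * μ ^ 2 * R := by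
    rcases le_or_gt x R with h | h
    · have hmsq : R ≤ 4 * μ ^ 2 * R := by
        nlinarith [mul_nonneg (mul_nonneg (sub_nonneg.mpr hμ1)
          (by linarith : (0:ℝ) ≤ μ + 1)) hR0]
      linarith
    · have hxpos : 0 < x := lt_of_le_of_lt hR0 h
      have h8 : lam * x ^ 2 ≤ (1 + 3 * μ) * R * x := by
        have hp : μ * R * R ≤ μ * R * x :=
          mul_le_mul_of_nonneg_left h.le (mul_nonneg hμ0.le hR0)
        nlinarith [hquad, hp]
      have h9 : lam * x ≤ (1 + 3 * μ) * R := by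
        have h8' : (lam * x) * x ≤ ((1 + 3 * μ) * R) * x := by nlinarith [h8]
        exact le_of_mul_le_mul_right h8' hxpos
      have h10 : x = μ * (lam * x) := by rw [← mul_assoc, mul_comm μ lam, hlamμ, one_mul]
      rw [h10]
      calc μ * (lam * x) ≤ μ * ((1 + 3 * μ) * R) := by
            exact mul_le_mul_of_nonneg_left h9 hμ0.le
        _ ≤ 4 * μ ^ 2 * R := by
            linarith [mul_nonneg (mul_nonneg hμ0.le (sub_nonneg.mpr hμ1)) hR0]
  -- conclude
  have hsumP : (∑ α, ‖P α‖) = x + S :=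
    (Finset.add_sum_erase _ _ (Finset.mem_univ i0)).symm
  rw [hsumP]
  have hq2 : |q| ≤ ‖V‖ + μ * (4 * μ ^ 2 * R) + μ * S := by
    have := mul_le_mul_of_nonneg_left hx hμ0.le
    linarith [hqb]
  show x + S + |q| ≤ 20 * μ ^ 3 * R
  have e1 : 0 ≤ (μ ^ 3 - μ ^ 2) * R :=
    mul_nonneg (by nlinarith [hμ0, hμ1, sq_nonneg μ]) hR0
  have e2 : 0 ≤ (μ ^ 3 - μ) * R :=
    mul_nonneg (by nlinarith [hμ0, hμ1, sq_nonneg μ, sq_nonneg (μ - 1)]) hR0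
  have e3 : 0 ≤ (μ ^ 3 - 1) * R :=
    mul_nonneg (by nlinarith [hμ0, hμ1, sq_nonneg μ, sq_nonneg (μ - 1)]) hR0
  have e4 : 0 ≤ μ ^ 3 * R := mul_nonneg (by positivity) hR0
  have e5 : μ * S ≤ μ * R := mul_le_mul_of_nonneg_left hSR hμ0.le
  linarith [hx, hq2, hVR, hSR, e1, e2, e3, e4, e5]

/-- Algebraic recovery of the full gradient and pressure: under the strong ellipticity
condition, there is `C = C(d, λ)` such that whenever `∑_α P_α^α = ℓ` and
`V = ∑_β A^{1β} P_β + q e₁`, one has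
`∑_α |P_α| + |q| ≤ C (|V| + ∑_{α ≥ 2} |P_α| + |ℓ|)`. -/
theorem stmt_17 (d : ℕ) (hd : 2 ≤ d) (lam : ℝ) (hlam : lam ∈ Ioc (0 : ℝ) 1) :
    ∃ C > 0, ∀ A : Fin d → Fin d → (EuclideanSpace ℝ (Fin d) →L[ℝ] EuclideanSpace ℝ (Fin d)),
      (∀ α β, ‖A α β‖ ≤ lam⁻¹) →
      (∀ ξ : Fin d → EuclideanSpace ℝ (Fin d),
        lam * ∑ α, ‖ξ α‖ ^ 2 ≤ ∑ α, ∑ β, ⟪A α β (ξ β), ξ α⟫) →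
      ∀ (P : Fin d → EuclideanSpace ℝ (Fin d)) (q ℓ : ℝ),
        (∑ α, P α α) = ℓ →
        (∑ α, ‖P α‖) + |q| ≤
          C * (‖(∑ β, A ⟨0, by omega⟩ β (P β)) +
                  q • EuclideanSpace.single (⟨0, by omega⟩ : Fin d) (1 : ℝ)‖ +
               (∑ α ∈ Finset.univ.erase (⟨0, by omega⟩ : Fin d), ‖P α‖) + |ℓ|) := by
  obtain ⟨hl0, hl1⟩ := hlam
  refine ⟨20 * lam⁻¹ ^ 3, by positivity, ?_⟩
  intro A hA hell P q ℓ hsum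
  exact stmt_17_aux lam hl0 hl1 A hA hell _ P q ℓ hsum
end
end
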